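/- Let τ ∈ (0,1]. Let J be an open interval containing 0 and λ : J → ℂ a continuous function such that λ(u) = 1 − u²/2 + o(u²) as u → 0. Suppose there exist C > 0 and an integer N ≥ 1 such that for every real t with |t| ≤ 1 and every integer n ≥ N with t/√n ∈ J one has |λ(t/√n)^n − e^{−t²/2}| ≤ C (|t|/√n)^τ. Then λ(u) = 1 − u²/2 + O(|u|^{2+τ}) as u → 0, i.e. there exist C' > 0 and η > 0 such that |λ(u) − 1 + u²/2| ≤ C' |u|^{2+τ} for every u ∈ J with |u| ≤ η. -/

import Mathlib

open Filter Asymptotics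

/-- Auxiliary: `|a^i − b^i| ≤ i · M^i · |a − b|` when `|a|, |b| ≤ M` and `1 ≤ M`. -/
lemma stmt_5_aux_pow_sub (M : ℝ) (hM : 1 ≤ M) (a b : ℂ)
    (ha : ‖a‖ ≤ M) (hb : ‖b‖ ≤ M) :
    ∀ i : ℕ, ‖a ^ i - b ^ i‖ ≤ i * M ^ i * ‖a - b‖ := by
  intro i
  induction i with
  | zero => simp
  | succ i ih =>
    have hsplit : a ^ (i + 1) - b ^ (i + 1) = a * (a ^ i - b ^ i) + (a - b) * b ^ i := by
      ring
    have hMpos : (0 : ℝ) < M := lt_of_lt_of_le one_pos hM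
    have hbpow : ‖b ^ i‖ ≤ M ^ i := by
      rw [norm_pow]
      exact pow_le_pow_left₀ (norm_nonneg b) hb i
    calc ‖a ^ (i + 1) - b ^ (i + 1)‖
        ≤ ‖a * (a ^ i - b ^ i)‖ + ‖(a - b) * b ^ i‖ := by
          rw [hsplit]; exact norm_add_le _ _
      _ = ‖a‖ * ‖a ^ i - b ^ i‖
          + ‖a - b‖ * ‖b ^ i‖ := by rw [norm_mul, norm_mul]
      _ ≤ M * (i * M ^ i * ‖a - b‖) + ‖a - b‖ * M ^ i := by
          gcongr
      _ ≤ (i + 1 : ℕ) * M ^ (i + 1) * ‖a - b‖ := by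
          have h1 : M ^ i ≤ M ^ (i + 1) := pow_le_pow_right₀ hM (Nat.le_succ i)
          have hd : ‖a - b‖ * M ^ i ≤ ‖a - b‖ * M ^ (i + 1) :=
            mul_le_mul_of_nonneg_left h1 (norm_nonneg _)
          have he : M * (i * M ^ i * ‖a - b‖)
              = i * M ^ (i + 1) * ‖a - b‖ := by rw [pow_succ]; ring
          push_cast
          linarith

set_option maxHeartbeats 2000000 in
/-- Scalar content of Lemma 4.2 of the paper: a second-order Taylor expansion with
explicit error rate `O(|u|^{2+τ})` for the perturbed dominating eigenvalue `λ(·)`. -/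
theorem stmt_5
    (τ : ℝ) (hτ : 0 < τ) (hτ1 : τ ≤ 1)
    (a b : ℝ) (ha : a < 0) (hb : 0 < b) (J : Set ℝ) (hJ : J = Set.Ioo a b)
    (lam : ℝ → ℂ) (hcont : ContinuousOn lam J)
    (hexp : (fun u : ℝ => lam u - 1 + u ^ 2 / 2) =o[nhds 0] fun u : ℝ => u ^ 2)
    (C : ℝ) (hC : 0 < C) (N : ℕ) (hN : 1 ≤ N)
    (hmaj : ∀ t : ℝ, |t| ≤ 1 → ∀ n : ℕ, N ≤ n → t / Real.sqrt n ∈ J →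
      ‖lam (t / Real.sqrt n) ^ n - Real.exp (-t ^ 2 / 2)‖
        ≤ C * (|t| / Real.sqrt n) ^ τ) :
    ∃ C' > (0 : ℝ), ∃ η > (0 : ℝ), ∀ u ∈ J, |u| ≤ η →
      ‖lam u - 1 + u ^ 2 / 2‖ ≤ C' * |u| ^ (2 + τ) := by
  -- extract the ε = 1/16 little-o bound
  have h16 := hexp.def (by norm_num : (0:ℝ) < 1/16)
  rw [Metric.eventually_nhds_iff] at h16
  obtain ⟨η₁, hη₁pos, hsmall⟩ := h16
  have hsmall' : ∀ u : ℝ, |u| < η₁ →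
      ‖lam u - 1 + u ^ 2 / 2‖ ≤ (1/16) * u ^ 2 := by
    intro u hu
    have := hsmall (y := u) (by simpa [Real.dist_eq] using hu)
    simpa [Real.norm_eq_abs, abs_of_nonneg (sq_nonneg u)] using this
  refine ⟨8 * C + 1, by positivity, min (η₁ / 2) (min (1/2) (1 / (2 * N))), by positivity, ?_⟩
  intro u huJ hule
  have huη₁ : |u| < η₁ := lt_of_le_of_lt (hule.trans (min_le_left _ _)) (by linarith)
  have hu12 : |u| ≤ 1/2 := hule.trans ((min_le_right _ _).trans (min_le_left _ _))
  have huN : |u| ≤ 1 / (2 * N) := hule.trans ((min_le_right _ _).trans (min_le_right _ _))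
  rcases eq_or_ne u 0 with rfl | hu0
  · have h0 := hsmall' 0 (by simpa using hη₁pos)
    simp only [abs_zero] at *
    have : Real.rpow 0 (2 + τ) = 0 := Real.zero_rpow (by linarith)
    rw [show ((0:ℝ) ^ (2 + τ)) = (0:ℝ) from this]
    simpa using h0.trans (by norm_num : (1/16:ℝ) * 0 ^ 2 ≤ 0)
  -- main case
  have hu2pos : (0:ℝ) < u ^ 2 := by positivity
  have hu14 : u ^ 2 ≤ 1/4 := by
    have : |u| ^ 2 ≤ (1/2 : ℝ) ^ 2 := pow_le_pow_left₀ (abs_nonneg u) hu12 2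
    simpa [sq_abs] using this.trans_eq (by norm_num)
  have h1u : (4:ℝ) ≤ 1 / u ^ 2 := by
    rw [le_div_iff₀ hu2pos]; linarith
  set n := ⌊1 / u ^ 2⌋₊ with hn_def
  have hn_le : (n:ℝ) ≤ 1 / u ^ 2 := Nat.floor_le (by positivity)
  have hn_gt : 1 / u ^ 2 - 1 < (n:ℝ) := Nat.sub_one_lt_floor _
  have hn_ge : 1 / (2 * u ^ 2) ≤ (n:ℝ) := by
    have : 1 / (2 * u ^ 2) ≤ 1 / u ^ 2 - 1 := by
      rw [div_sub' (ne_of_gt hu2pos), div_le_div_iff₀ (by positivity) hu2pos]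
      nlinarith
    linarith
  have hnu : (n:ℝ) * u ^ 2 ≤ 1 := by
    rw [← le_div_iff₀ hu2pos]; exact hn_le
  have hnpos : (0:ℝ) < n := lt_of_lt_of_le (by positivity) hn_ge
  have hn1 : 1 ≤ n := by exact_mod_cast Nat.one_le_iff_ne_zero.mpr (by
    intro h; rw [h] at hnpos; simp at hnpos)
  have hNpos : (0:ℝ) < (N:ℝ) := by exact_mod_cast hN
  have hNn : N ≤ n := by
    have hu2N : u ^ 2 ≤ (1 / (2 * N)) ^ 2 := by
      rw [← sq_abs]
      exact pow_le_pow_left₀ (abs_nonneg u) huN 2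
    have : (N:ℝ) ≤ 1 / (2 * u ^ 2) := by
      rw [le_div_iff₀ (by positivity)]
      have h2 : (N:ℝ) * (2 * u ^ 2) ≤ (N:ℝ) * (2 * (1 / (2 * N)) ^ 2) := by
        gcongr
      have h3 : (N:ℝ) * (2 * (1 / (2 * N)) ^ 2) = 1 / (2 * N) := by
        field_simp
      have hN1 : (1:ℝ) ≤ N := by exact_mod_cast hN
      have h4 : (1:ℝ) / (2 * N) ≤ 1 := by
        rw [div_le_one (by positivity)]; linarith
      linarith
    exact_mod_cast this.trans hn_ge
  -- set up t
  have hsn_pos : (0:ℝ) < Real.sqrt n := Real.sqrt_pos.mpr hnpos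
  set t := u * Real.sqrt n with ht_def
  have ht : t / Real.sqrt n = u := by
    field_simp
    rw [ht_def]; ring
  have ht2 : t ^ 2 = n * u ^ 2 := by
    rw [ht_def, mul_pow, Real.sq_sqrt (le_of_lt hnpos)]; ring
  have habs_t : |t| ≤ 1 := by
    have h1 : |t| ^ 2 ≤ 1 := by rw [sq_abs, ht2]; exact hnu
    nlinarith [abs_nonneg t]
  have habs_t' : |t| / Real.sqrt n = |u| := by
    rw [ht_def, abs_mul, abs_of_nonneg (Real.sqrt_nonneg _), mul_div_assoc,
      div_self (ne_of_gt hsn_pos), mul_one]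
  have hmaj' := hmaj t habs_t n hNn (by rw [ht]; exact huJ)
  rw [ht, habs_t'] at hmaj'
  -- rewrite exp(-t²/2) as r^n
  set r := Real.exp (-u ^ 2 / 2) with hr_def
  have hrpos : 0 < r := Real.exp_pos _
  have hr1 : r ≤ 1 := Real.exp_le_one_iff.mpr (by nlinarith)
  have hbn : Real.exp (-t ^ 2 / 2) = r ^ n := by
    rw [hr_def, ← Real.exp_nat_mul, ht2]; ring_nf
  rw [hbn] at hmaj'
  push_cast at hmaj'
  -- hmaj' : ‖lam u ^ n - (r:ℂ) ^ n‖ ≤ C * |u| ^ τ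
  set A : ℂ := lam u with hA_def
  set B : ℂ := (r : ℂ) with hB_def
  have hBabs : ‖B‖ = r := by
    rw [hB_def, Complex.norm_real, Real.norm_eq_abs, abs_of_pos hrpos]
  have h1 := hsmall' u huη₁
  -- bound |r - (1 - u²/2)|
  have hexpb : |r - (1 - u ^ 2 / 2)| ≤ 3 / 16 * u ^ 4 := by
    have hx : |(-u ^ 2 / 2 : ℝ)| ≤ 1 := by
      rw [abs_div, abs_neg, abs_of_nonneg (sq_nonneg u)]
      norm_num; linarith
    have := Real.exp_bound hx (n := 2) (by norm_num)
    have hsum : ∑ m ∈ Finset.range 2, (-u ^ 2 / 2 : ℝ) ^ m / m.factorial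
        = 1 - u ^ 2 / 2 := by
      simp [Finset.sum_range_succ]
      ring
    rw [hsum] at this
    have habs : |(-u ^ 2 / 2 : ℝ)| = u ^ 2 / 2 := by
      rw [abs_div, abs_neg, abs_of_nonneg (sq_nonneg u)]; norm_num
    rw [habs] at this
    calc |r - (1 - u ^ 2 / 2)| ≤ (u ^ 2 / 2) ^ 2 * ((2:ℕ).succ / ((2:ℕ).factorial * 2)) := this
      _ = 3 / 16 * u ^ 4 := by norm_num; ring
  have hB1 : ‖B - 1 + (u:ℂ) ^ 2 / 2‖ ≤ 3 / 16 * u ^ 4 := by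
    have : B - 1 + (u:ℂ) ^ 2 / 2 = ((r - (1 - u ^ 2 / 2) : ℝ) : ℂ) := by
      rw [hB_def]; push_cast; ring
    rw [this, Complex.norm_real, Real.norm_eq_abs]
    exact hexpb
  have hu4 : 3 / 16 * u ^ 4 ≤ u ^ 2 / 16 := by
    nlinarith [mul_le_mul_of_nonneg_left hu14 (le_of_lt hu2pos)]
  have hAB : ‖A - B‖ ≤ u ^ 2 / 8 := by
    have hdecomp : A - B = (A - 1 + (u:ℂ) ^ 2 / 2) - (B - 1 + (u:ℂ) ^ 2 / 2) := by ring
    calc ‖A - B‖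
        ≤ ‖A - 1 + (u:ℂ) ^ 2 / 2‖ + ‖B - 1 + (u:ℂ) ^ 2 / 2‖ := by
          rw [hdecomp]; exact norm_sub_le _ _
      _ ≤ 1/16 * u ^ 2 + 3/16 * u ^ 4 := add_le_add h1 hB1
      _ ≤ u ^ 2 / 8 := by nlinarith
  have hAabs : ‖A‖ ≤ 1 + u ^ 2 / 8 := by
    have e : B + (A - B) = A := by ring
    have h := norm_add_le B (A - B)
    rw [e, hBabs] at h
    linarith
  set M : ℝ := 1 + u ^ 2 / 8 with hM_def
  have hM1 : (1:ℝ) ≤ M := by rw [hM_def]; nlinarith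
  have hBM : ‖B‖ ≤ M := by rw [hBabs, hM_def]; nlinarith
  have hMn : M ^ n ≤ 2 := by
    have h1' : M ≤ Real.exp (u ^ 2 / 8) := by
      have := Real.add_one_le_exp (u ^ 2 / 8)
      rw [hM_def]; linarith
    calc M ^ n ≤ Real.exp (u ^ 2 / 8) ^ n :=
          pow_le_pow_left₀ (by linarith) h1' n
      _ = Real.exp (n * (u ^ 2 / 8)) := by rw [← Real.exp_nat_mul]
      _ ≤ Real.exp (1/8) := Real.exp_le_exp.mpr (by nlinarith)
      _ ≤ 2 := by
        have h8 : Real.exp (1/8) ^ 8 = Real.exp 1 := by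
          rw [← Real.exp_nat_mul]; norm_num
        have he : Real.exp 1 ≤ (2:ℝ) ^ 8 := by
          have := Real.exp_one_lt_d9
          norm_num at this ⊢; linarith
        have := le_of_pow_le_pow_left₀ (n := 8) (by norm_num) (by norm_num : (0:ℝ) ≤ 2)
          (by rw [h8]; exact he)
        exact this
  -- lower bound on the geometric sum
  set S : ℂ := ∑ i ∈ Finset.range n, A ^ i * B ^ (n - 1 - i) with hS_def
  have hterm : ∀ i ∈ Finset.range n, (1/4 : ℝ) ≤ (A ^ i * B ^ (n - 1 - i)).re := by
    intro i hi
    rw [Finset.mem_range] at hi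
    have hiexp : (n - 1 - i) + i = n - 1 := by omega
    have hBn1 : B ^ (n - 1 - i) * B ^ i = B ^ (n - 1) := by
      rw [← pow_add, hiexp]
    have hdiff : A ^ i * B ^ (n - 1 - i) - B ^ (n - 1)
        = B ^ (n - 1 - i) * (A ^ i - B ^ i) := by
      rw [mul_sub, hBn1]; ring
    have hpowB : ‖B ^ (n - 1 - i)‖ ≤ 1 := by
      rw [norm_pow, hBabs]
      exact pow_le_one₀ (le_of_lt hrpos) hr1
    have hAiBi : ‖A ^ i - B ^ i‖ ≤ i * M ^ i * ‖A - B‖ :=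
      stmt_5_aux_pow_sub M hM1 A B hAabs hBM i
    have hMi : M ^ i ≤ 2 := le_trans (pow_le_pow_right₀ hM1 hi.le) hMn
    have hdiff_abs : ‖A ^ i * B ^ (n - 1 - i) - B ^ (n - 1)‖ ≤ 1/4 := by
      rw [hdiff, norm_mul]
      calc ‖B ^ (n - 1 - i)‖ * ‖A ^ i - B ^ i‖
          ≤ 1 * (i * M ^ i * ‖A - B‖) := by
            gcongr
        _ ≤ 1 * (n * 2 * (u ^ 2 / 8)) := by
            gcongr <;> exact_mod_cast hi.le
        _ ≤ 1/4 := by nlinarith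
    have hBn1_re : ((B : ℂ) ^ (n - 1)).re = r ^ (n - 1) := by
      rw [hB_def, ← Complex.ofReal_pow, Complex.ofReal_re]
    have hrn1 : (1/2 : ℝ) ≤ r ^ (n - 1) := by
      have : r ^ (n - 1) = Real.exp ((n - 1 : ℕ) * (-u ^ 2 / 2)) := by
        rw [hr_def, ← Real.exp_nat_mul]
      rw [this]
      have hle := Real.add_one_le_exp ((n - 1 : ℕ) * (-u ^ 2 / 2))
      have hcast : ((n - 1 : ℕ) : ℝ) ≤ (n : ℝ) := by exact_mod_cast Nat.sub_le n 1
      have hn1u : ((n - 1 : ℕ) : ℝ) * (u ^ 2 / 2) ≤ 1/2 := by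
        have h' : ((n - 1 : ℕ) : ℝ) * (u ^ 2 / 2) ≤ (n:ℝ) * (u ^ 2 / 2) := by
          gcongr
        have h'' : (n:ℝ) * (u ^ 2 / 2) = ((n:ℝ) * u ^ 2) / 2 := by ring
        linarith
      have heq : ((n - 1 : ℕ) : ℝ) * (-u ^ 2 / 2) = -(((n - 1 : ℕ) : ℝ) * (u ^ 2 / 2)) := by
        ring
      linarith [heq ▸ hle]
    have habs_re : |(A ^ i * B ^ (n - 1 - i)).re - (B ^ (n - 1)).re|
        ≤ ‖A ^ i * B ^ (n - 1 - i) - B ^ (n - 1)‖ := by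
      rw [← Complex.sub_re]
      exact Complex.abs_re_le_norm _
    have := abs_le.mp habs_re
    rw [hBn1_re] at this
    linarith [this.1, hdiff_abs, hrn1]
  have hS_re : (n : ℝ) / 4 ≤ S.re := by
    rw [hS_def, Complex.re_sum]
    calc (n : ℝ) / 4 = ∑ _i ∈ Finset.range n, (1/4 : ℝ) := by
          rw [Finset.sum_const, Finset.card_range]; ring
      _ ≤ ∑ i ∈ Finset.range n, (A ^ i * B ^ (n - 1 - i)).re :=
          Finset.sum_le_sum hterm
  have hS_abs : (n : ℝ) / 4 ≤ ‖S‖ :=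
    le_trans hS_re (Complex.re_le_norm S)
  -- conclude
  have hgeom : S * (A - B) = A ^ n - B ^ n := geom_sum₂_mul A B n
  have hABn : ‖A ^ n - B ^ n‖ ≤ C * |u| ^ τ := hmaj'
  have hprod : ‖S‖ * ‖A - B‖ ≤ C * |u| ^ τ := by
    rw [← norm_mul, hgeom]; exact hABn
  have hS_pos : (0:ℝ) < ‖S‖ := lt_of_lt_of_le (by positivity) hS_abs
  have hABfinal : ‖A - B‖ ≤ 4 * C * |u| ^ τ / n := by
    have h1' : ‖A - B‖ * ((n:ℝ) / 4) ≤ ‖S‖ * ‖A - B‖ := by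
      rw [mul_comm (‖S‖)]
      gcongr
    rw [le_div_iff₀ hnpos]
    calc ‖A - B‖ * n = 4 * (‖A - B‖ * ((n:ℝ)/4)) := by ring
      _ ≤ 4 * (C * |u| ^ τ) := by linarith [h1'.trans hprod]
      _ = 4 * C * |u| ^ τ := by ring
  have huabs_pos : (0:ℝ) < |u| := abs_pos.mpr hu0
  have hinv_n : 1 / (n:ℝ) ≤ 2 * u ^ 2 := by
    rw [div_le_iff₀ hnpos]
    rw [div_le_iff₀ (by positivity)] at hn_ge
    nlinarith
  have hrpow_split : |u| ^ (2 + τ) = u ^ 2 * |u| ^ τ := by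
    rw [Real.rpow_add huabs_pos, Real.rpow_two, sq_abs]
  have hAB2 : ‖A - B‖ ≤ 8 * C * |u| ^ (2 + τ) := by
    calc ‖A - B‖ ≤ 4 * C * |u| ^ τ / n := hABfinal
      _ = 4 * C * |u| ^ τ * (1 / n) := by ring
      _ ≤ 4 * C * |u| ^ τ * (2 * u ^ 2) := by
          gcongr
      _ = 8 * C * (u ^ 2 * |u| ^ τ) := by ring
      _ = 8 * C * |u| ^ (2 + τ) := by rw [hrpow_split]
  have hu4_rpow : u ^ 4 ≤ |u| ^ (2 + τ) := by
    have h4 : u ^ 4 = |u| ^ ((4:ℕ):ℝ) := by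
      rw [Real.rpow_natCast]
      rw [← abs_pow, abs_of_nonneg (by positivity)]
    rw [h4]
    apply Real.rpow_le_rpow_of_exponent_ge huabs_pos (by linarith)
    push_cast; linarith
  calc ‖lam u - 1 + (u:ℝ) ^ 2 / 2‖
      = ‖(A - B) + (B - 1 + (u:ℂ) ^ 2 / 2)‖ := by
        rw [hA_def]; norm_num; ring_nf
    _ ≤ ‖A - B‖ + ‖B - 1 + (u:ℂ) ^ 2 / 2‖ := norm_add_le _ _
    _ ≤ 8 * C * |u| ^ (2 + τ) + 3/16 * u ^ 4 := add_le_add hAB2 hB1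
    _ ≤ 8 * C * |u| ^ (2 + τ) + 1 * |u| ^ (2 + τ) := by
        have h0 : (0:ℝ) ≤ u ^ 4 := by positivity
        have h1 : 3 / 16 * u ^ 4 ≤ u ^ 4 := by
          have h' := mul_le_mul_of_nonneg_right (by norm_num : (3:ℝ)/16 ≤ 1) h0
          rwa [one_mul] at h'
        have h2 : 3 / 16 * u ^ 4 ≤ 1 * |u| ^ (2 + τ) := by
          rw [one_mul]; exact h1.trans hu4_rpow
        exact add_le_add le_rfl h2
    _ = (8 * C + 1) * |u| ^ (2 + τ) := by ring
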